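/- Let I be a finitely generated ideal of a commutative Noetherian ring R with generators u_1,...,u_m, and suppose p = (I^k : h) is prime for some h ∈ R. If (I^{k+1} : I) = I^k, then p = (I^{k+1} : h·u_i) for some i, hence p is an associated prime of I^{k+1}. -/

import Mathlib

theorem colon_prime_persists
    {R : Type*} [CommRing R] [IsNoetherianRing R] {m : ℕ} (u : Fin m → R)
    (I : Ideal R) (hI : I = Ideal.span (Set.range u))
    (k : ℕ) (hk : 1 ≤ k) (h : R) (p : Ideal R)
    (hp : p = Submodule.colon (I ^ k) (Ideal.span {h}))
    (hprime : p.IsPrime)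
    (hspp : Submodule.colon (I ^ (k + 1)) I = I ^ k) :
    (∃ i : Fin m, p = Submodule.colon (I ^ (k + 1)) (Ideal.span {h * u i})) ∧
      p ∈ associatedPrimes R (R ⧸ I ^ (k + 1)) := by
  have hu : ∀ i, u i ∈ I := fun i => hI ▸ Ideal.subset_span ⟨i, rfl⟩
  -- p is contained in each colon ideal
  have hle : ∀ i, p ≤ Submodule.colon (I ^ (k + 1)) (Ideal.span {h * u i}) := by
    intro i r hr
    rw [hp, Ideal.mem_colon_span_singleton] at hr
    rw [Ideal.mem_colon_span_singleton]
    have := Ideal.mul_mem_mul hr (hu i)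
    rw [← pow_succ] at this
    simpa [smul_eq_mul, mul_assoc, mul_comm, mul_left_comm] using this
  -- some colon ideal is contained in p
  have hex : ∃ i, Submodule.colon (I ^ (k + 1)) (Ideal.span {h * u i}) ≤ p := by
    by_contra hcon
    push_neg at hcon
    have hx : ∀ i, ∃ x, x ∈ Submodule.colon (I ^ (k + 1)) (Ideal.span {h * u i}) ∧ x ∉ p := by
      intro i
      obtain ⟨x, hx1, hx2⟩ := SetLike.not_le_iff_exists.mp (hcon i)
      exact ⟨x, hx1, hx2⟩
    choose x hx1 hx2 using hx
    set X : R := ∏ i : Fin m, x i with hX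
    have hXp : X ∉ p := by
      intro hmem
      obtain ⟨i, _, hi⟩ := Ideal.IsPrime.prod_mem_iff.mp hmem
      exact hx2 i hi
    -- X * h ∈ (I^{k+1} : I)
    have hXh : X * h ∈ Submodule.colon (I ^ (k + 1)) I := by
      have hIle : I ≤ Submodule.colon (I ^ (k + 1)) (Ideal.span {X * h}) := by
        conv_lhs => rw [hI]
        rw [Ideal.span_le]
        rintro _ ⟨i, rfl⟩
        rw [SetLike.mem_coe, Ideal.mem_colon_span_singleton]
        have hxi : x i * (h * u i) ∈ I ^ (k + 1) := by
          have := hx1 i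
          rw [Ideal.mem_colon_span_singleton] at this
          simpa [smul_eq_mul] using this
        have hmem : (∏ j ∈ Finset.univ.erase i, x j) * (x i * (h * u i)) ∈ I ^ (k + 1) :=
          Ideal.mul_mem_left _ _ hxi
        have hprod : (∏ j ∈ Finset.univ.erase i, x j) * x i = X := by
          rw [hX, Finset.prod_erase_mul _ _ (Finset.mem_univ i)]
        have heq2 : u i * (X * h) = (∏ j ∈ Finset.univ.erase i, x j) * (x i * (h * u i)) := by
          rw [← hprod]; ring
        rw [heq2]
        exact hmem
      rw [Submodule.mem_colon]
      intro y hy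
      have := hIle hy
      rw [Ideal.mem_colon_span_singleton] at this
      simpa [smul_eq_mul, mul_comm] using this
    rw [hspp] at hXh
    have : X ∈ p := by
      rw [hp, Ideal.mem_colon_span_singleton]
      simpa [smul_eq_mul] using hXh
    exact hXp this
  obtain ⟨i, hi⟩ := hex
  have heq : p = Submodule.colon (I ^ (k + 1)) (Ideal.span {h * u i}) := le_antisymm (hle i) hi
  refine ⟨⟨i, heq⟩, ?_⟩
  refine ⟨hprime, ⟨Submodule.Quotient.mk (h * u i), ?_⟩⟩
  have hann : p = (⊥ : Submodule R (R ⧸ I ^ (k + 1))).colon {Submodule.Quotient.mk (h * u i)} := by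
    rw [heq]
    ext r
    rw [Submodule.mem_colon_singleton, Submodule.mem_bot, Ideal.mem_colon_span_singleton,
      ← Submodule.Quotient.mk_smul, Submodule.Quotient.mk_eq_zero, smul_eq_mul]
  rw [← hann, hprime.radical]
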